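/- Let 0 < α ≤ 3 and K ≥ 1. Suppose H : ℝ³ → [0,1] satisfies ∫_{B(x₀,ρ)} H dx ≤ A ρ^α for all x₀ ∈ ℝ³ and ρ ≥ 1, with A > 0. Tile ℝ³ by cubes {Q_l} of side-length K/3 and define H_K(x) = A^{-1} K^{-α} ∫_{Q_l} H(y) dy for x ∈ Q_l. Then there is an absolute constant C such that ∫_{B(x₀,R)} H_K(x) dx ≤ C K^{3-α} R^α for all x₀ ∈ ℝ³ and R ≥ 1. -/

import Mathlib

open MeasureTheory Metric ENNReal

local notation "E3" => EuclideanSpace ℝ (Fin 3)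

lemma stmt4_eval_measurable (i : Fin 3) : Measurable fun y : E3 => y i :=
  (EuclideanSpace.proj (𝕜 := ℝ) i).continuous.measurable

lemma stmt4_cube_measurable (c : ℝ) (x : E3) :
    MeasurableSet {y : E3 | ∀ i, ⌊y i / c⌋ = ⌊x i / c⌋} := by
  have h : {y : E3 | ∀ i, ⌊y i / c⌋ = ⌊x i / c⌋}
      = ⋂ i, (fun y : E3 => ⌊y i / c⌋) ⁻¹' {⌊x i / c⌋} := by
    ext y; simp
  rw [h]
  exact MeasurableSet.iInter fun i =>
    (((stmt4_eval_measurable i).div_const c).floor) (measurableSet_singleton _)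

lemma stmt4_coord_dist (z w : E3) (i : Fin 3) : dist (z i) (w i) ≤ dist z w := by
  have h1 : dist (z i) (w i) ^ 2 ≤ ∑ j, dist (z j) (w j) ^ 2 :=
    Finset.single_le_sum (f := fun j => dist (z j) (w j) ^ 2)
      (fun j _ => sq_nonneg _) (Finset.mem_univ i)
  calc dist (z i) (w i) = Real.sqrt (dist (z i) (w i) ^ 2) := (Real.sqrt_sq dist_nonneg).symm
    _ ≤ Real.sqrt (∑ j, dist (z j) (w j) ^ 2) := Real.sqrt_le_sqrt h1
    _ = dist z w := (EuclideanSpace.dist_eq z w).symm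

lemma stmt4_abs_sub_lt {c : ℝ} (hc : 0 < c) {a b : ℝ} (h : ⌊a / c⌋ = ⌊b / c⌋) :
    |a - b| < c := by
  have h1 : (⌊b / c⌋ : ℝ) ≤ a / c := h ▸ Int.floor_le (a / c)
  have h2 : a / c < ⌊b / c⌋ + 1 := by rw [← h]; exact Int.lt_floor_add_one (a / c)
  have h3 : (⌊b / c⌋ : ℝ) ≤ b / c := Int.floor_le (b / c)
  have h4 : b / c < ⌊b / c⌋ + 1 := Int.lt_floor_add_one (b / c)
  have h5 : |a / c - b / c| < 1 := abs_sub_lt_iff.2 ⟨by linarith, by linarith⟩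
  have h6 : a / c - b / c = (a - b) / c := by ring
  rw [h6, abs_div, abs_of_pos hc, div_lt_one hc] at h5
  exact h5

/-- A cube of side `c` is inside the ball of radius `3c` around any of its points. -/
lemma stmt4_cube_subset_ball {c : ℝ} (hc : 0 < c) (x : E3) :
    {y : E3 | ∀ i, ⌊y i / c⌋ = ⌊x i / c⌋} ⊆ ball x (3 * c) := by
  intro y hy
  have hd : ∀ i, dist (y i) (x i) < c := fun i => by
    rw [Real.dist_eq]; exact stmt4_abs_sub_lt hc (hy i)
  have hsum : ∑ j, dist (y j) (x j) ^ 2 < (3 * c) ^ 2 := by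
    have : ∑ j, dist (y j) (x j) ^ 2 < ∑ _j : Fin 3, c ^ 2 :=
      Finset.sum_lt_sum_of_nonempty Finset.univ_nonempty fun j _ =>
        pow_lt_pow_left₀ (hd j) dist_nonneg two_ne_zero
    have h3 : ∑ _j : Fin 3, c ^ 2 = 3 * c ^ 2 := by simp
    nlinarith
  have hds : dist y x ^ 2 < (3 * c) ^ 2 := by
    rw [EuclideanSpace.dist_eq, Real.sq_sqrt (Finset.sum_nonneg fun j _ => sq_nonneg _)]
    exact hsum
  have := lt_of_pow_lt_pow_left₀ 2 (by positivity : (0:ℝ) ≤ 3 * c) hds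
  exact mem_ball.2 this

/-- Volume of a coordinate box in `E3`. -/
lemma stmt4_volume_box (a b : Fin 3 → ℝ) :
    volume {y : E3 | ∀ i, y i ∈ Set.Ico (a i) (b i)} = ∏ i, ENNReal.ofReal (b i - a i) := by
  have hset : {y : E3 | ∀ i, y i ∈ Set.Ico (a i) (b i)}
      = (MeasurableEquiv.toLp 2 (Fin 3 → ℝ)).symm ⁻¹'
        (Set.univ.pi fun i => Set.Ico (a i) (b i)) := by
    ext y
    simp [MeasurableEquiv.coe_toLp_symm, Set.mem_pi]
  rw [hset,
    (EuclideanSpace.volume_preserving_symm_measurableEquiv_toLp (Fin 3)).measure_preimage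
      ((MeasurableSet.univ_pi fun i => measurableSet_Ico).nullMeasurableSet),
    volume_pi_pi]
  simp [Real.volume_Ico]

lemma stmt4_cube_volume_le {c : ℝ} (hc : 0 < c) (x : E3) :
    volume {y : E3 | ∀ i, ⌊y i / c⌋ = ⌊x i / c⌋} ≤ ENNReal.ofReal c ^ 3 := by
  have hsub : {y : E3 | ∀ i, ⌊y i / c⌋ = ⌊x i / c⌋}
      ⊆ {y : E3 | ∀ i, y i ∈ Set.Ico (c * ⌊x i / c⌋) (c * ⌊x i / c⌋ + c)} := by
    intro y hy i
    have h := hy i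
    constructor
    · have h1 : (⌊x i / c⌋ : ℝ) ≤ y i / c := h ▸ Int.floor_le (y i / c)
      calc c * (⌊x i / c⌋ : ℝ) ≤ c * (y i / c) := by
            exact mul_le_mul_of_nonneg_left h1 hc.le
        _ = y i := by field_simp
    · have h2 : y i / c < ⌊x i / c⌋ + 1 := by rw [← h]; exact Int.lt_floor_add_one (y i / c)
      calc y i = c * (y i / c) := by field_simp
        _ < c * ((⌊x i / c⌋ : ℝ) + 1) := by exact mul_lt_mul_of_pos_left h2 hc
        _ = c * ⌊x i / c⌋ + c := by ring
  calc volume {y : E3 | ∀ i, ⌊y i / c⌋ = ⌊x i / c⌋}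
      ≤ volume {y : E3 | ∀ i, y i ∈ Set.Ico (c * ⌊x i / c⌋) (c * ⌊x i / c⌋ + c)} :=
        measure_mono hsub
    _ = ∏ _i : Fin 3, ENNReal.ofReal c := by
        rw [stmt4_volume_box]; congr 1; ext i; congr 1; ring
    _ = ENNReal.ofReal c ^ 3 := by simp

lemma stmt4_ball_volume_le {R : ℝ} (hR : 0 ≤ R) (x₀ : E3) :
    (volume (ball x₀ R)).toReal ≤ 8 * R ^ 3 := by
  have hsub : ball x₀ R ⊆ {y : E3 | ∀ i, y i ∈ Set.Ico (x₀ i - R) (x₀ i + R)} := by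
    intro y hy i
    have h := (stmt4_coord_dist y x₀ i).trans_lt (mem_ball.1 hy)
    rw [Real.dist_eq, abs_lt] at h
    constructor <;> [linarith; linarith]
  have hvol : volume (ball x₀ R) ≤ ENNReal.ofReal (2 * R) ^ 3 := by
    calc volume (ball x₀ R) ≤ _ := measure_mono hsub
      _ = ∏ _i : Fin 3, ENNReal.ofReal (2 * R) := by
          rw [stmt4_volume_box]; congr 1; ext i; congr 1; ring
      _ = ENNReal.ofReal (2 * R) ^ 3 := by simp
  have h8 : (ENNReal.ofReal (2 * R) ^ 3).toReal = 8 * R ^ 3 := by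
    rw [ENNReal.toReal_pow, ENNReal.toReal_ofReal (by linarith)]; ring
  calc (volume (ball x₀ R)).toReal
      ≤ (ENNReal.ofReal (2 * R) ^ 3).toReal :=
        ENNReal.toReal_mono (ENNReal.pow_ne_top ENNReal.ofReal_ne_top) hvol
    _ = 8 * R ^ 3 := h8



/-- localizing a weight of fractal dimension `α` at scale `K`
(averaging over a tiling of `ℝ³` by cubes of side `K/3` and normalizing by
`A⁻¹ K^{-α}`) produces a function satisfying the dimensionality bound with
constant `C K^{3-α}`, `C` absolute. -/
theorem stmt_4 :
    ∃ C : ℝ, 0 < C ∧ ∀ (α K A : ℝ), 0 < α → α ≤ 3 → 1 ≤ K → 0 < A →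
      ∀ H : EuclideanSpace ℝ (Fin 3) → ℝ, Measurable H →
        (∀ x, 0 ≤ H x) → (∀ x, H x ≤ 1) →
        (∀ (x₀ : EuclideanSpace ℝ (Fin 3)) (ρ : ℝ), 1 ≤ ρ →
          (∫ x in ball x₀ ρ, H x) ≤ A * ρ ^ α) →
        ∀ (x₀ : EuclideanSpace ℝ (Fin 3)) (R : ℝ), 1 ≤ R →
          (∫ x in ball x₀ R,
            (A⁻¹ * K ^ (-α) *
              ∫ y in {y : EuclideanSpace ℝ (Fin 3) |
                ∀ i, ⌊y i / (K/3)⌋ = ⌊x i / (K/3)⌋}, H y))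
          ≤ C * K ^ (3 - α) * R ^ α := by
  classical
  refine ⟨8, by norm_num, ?_⟩
  intro α K A hα hα3 hK hA H hHm h0 h1 hdim x₀ R hR
  have hK0 : (0:ℝ) < K := lt_of_lt_of_le one_pos hK
  have hR0 : (0:ℝ) < R := lt_of_lt_of_le one_pos hR
  have hc : (0:ℝ) < K / 3 := by positivity
  set Q : E3 → Set E3 :=
    fun x => {y : E3 | ∀ i, ⌊y i / (K/3)⌋ = ⌊x i / (K/3)⌋} with hQdef
  have hQmeas : ∀ x, MeasurableSet (Q x) := fun x => stmt4_cube_measurable _ x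
  have hQball : ∀ x, Q x ⊆ ball x K := by
    intro x
    have h := stmt4_cube_subset_ball hc x
    rwa [show 3 * (K/3) = K by ring] at h
  have hQvol : ∀ x, volume (Q x) ≤ ENNReal.ofReal (K/3) ^ 3 :=
    fun x => stmt4_cube_volume_le hc x
  have hHint : ∀ s : Set E3, volume s < ⊤ → IntegrableOn H s := by
    intro s hs
    refine Integrable.mono' (integrableOn_const (C := (1:ℝ)) hs.ne)
      hHm.aestronglyMeasurable.restrict ?_
    filter_upwards with x
    rw [Real.norm_eq_abs, abs_of_nonneg (h0 x)]
    exact h1 x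
  set f : E3 → ℝ≥0∞ := fun y => ENNReal.ofReal (H y) with hfdef
  have hfmeas : Measurable f := hHm.ennreal_ofReal
  set G : E3 → ℝ≥0∞ := fun x => ∫⁻ y in Q x, f y with hGdef
  have hval : ∀ x, (∫ y in Q x, H y) = (G x).toReal := by
    intro x
    rw [integral_eq_lintegral_of_nonneg_ae (Filter.Eventually.of_forall fun y => h0 y)
      hHm.aestronglyMeasurable.restrict]
  have hKα : (0:ℝ) < K ^ α := Real.rpow_pos_of_pos hK0 α
  have hGle : ∀ x, G x ≤ ENNReal.ofReal (A * K ^ α) := by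
    intro x
    calc G x ≤ ∫⁻ y in ball x K, f y := lintegral_mono_set (hQball x)
      _ = ENNReal.ofReal (∫ y in ball x K, H y) :=
          (ofReal_integral_eq_lintegral_ofReal (hHint _ measure_ball_lt_top)
            (Filter.Eventually.of_forall h0)).symm
      _ ≤ ENNReal.ofReal (A * K ^ α) := ENNReal.ofReal_le_ofReal (hdim x K hK)
  have hGfin : ∀ x, G x ≠ ⊤ := fun x => ne_top_of_le_ne_top ENNReal.ofReal_ne_top (hGle x)
  have hHK_le_one : ∀ x, A⁻¹ * K ^ (-α) * (∫ y in Q x, H y) ≤ 1 := by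
    intro x
    rw [hval]
    have h2 : (G x).toReal ≤ A * K ^ α := by
      have h3 := ENNReal.toReal_mono ENNReal.ofReal_ne_top (hGle x)
      rwa [ENNReal.toReal_ofReal (by positivity)] at h3
    have hKneg : K ^ (-α) = (K ^ α)⁻¹ := Real.rpow_neg hK0.le α
    calc A⁻¹ * K ^ (-α) * (G x).toReal ≤ A⁻¹ * K ^ (-α) * (A * K ^ α) := by
          apply mul_le_mul_of_nonneg_left h2
          have : 0 ≤ K ^ (-α) := (Real.rpow_pos_of_pos hK0 _).le
          positivity
      _ = 1 := by rw [hKneg]; field_simp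
  have hHK_nonneg : ∀ x, 0 ≤ A⁻¹ * K ^ (-α) * (∫ y in Q x, H y) := by
    intro x
    have h2 : (0:ℝ) ≤ ∫ y in Q x, H y := integral_nonneg h0
    have h3 : (0:ℝ) ≤ K ^ (-α) := (Real.rpow_pos_of_pos hK0 _).le
    positivity
  have hKnegpos : (0:ℝ) ≤ K ^ (-α) := (Real.rpow_pos_of_pos hK0 _).le
  show (∫ x in ball x₀ R, (A⁻¹ * K ^ (-α) * ∫ y in Q x, H y)) ≤ 8 * K ^ (3 - α) * R ^ α
  rcases le_total R K with hRK | hKR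
  · -- small radius
    have hbound : ‖∫ x in ball x₀ R, (A⁻¹ * K ^ (-α) * ∫ y in Q x, H y)‖
        ≤ 1 * (volume (ball x₀ R)).toReal := by
      refine norm_setIntegral_le_of_norm_le_const_ae' measure_ball_lt_top
        ?_
      filter_upwards with x _
      rw [Real.norm_eq_abs, abs_of_nonneg (hHK_nonneg x)]
      exact hHK_le_one x
    have h2 : (∫ x in ball x₀ R, (A⁻¹ * K ^ (-α) * ∫ y in Q x, H y))
        ≤ 1 * (volume (ball x₀ R)).toReal := le_trans (le_abs_self _) hbound
    have h3 : (1:ℝ) * (volume (ball x₀ R)).toReal ≤ 8 * R ^ 3 := by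
      rw [one_mul]; exact stmt4_ball_volume_le hR0.le x₀
    have h4 : (8:ℝ) * R ^ 3 ≤ 8 * K ^ (3 - α) * R ^ α := by
      have hRpow : R ^ (3:ℕ) = R ^ α * R ^ (3 - α) := by
        rw [← Real.rpow_add hR0, show α + (3 - α) = ((3:ℕ):ℝ) by push_cast; ring,
          Real.rpow_natCast]
      rw [hRpow]
      have h5 : R ^ (3 - α) ≤ K ^ (3 - α) := Real.rpow_le_rpow hR0.le hRK (by linarith)
      have h6 : (0:ℝ) ≤ R ^ α := (Real.rpow_pos_of_pos hR0 _).le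
      nlinarith
    linarith
  · -- large radius
    set B := ball x₀ R with hBdef
    set S : Set (E3 × E3) :=
      {p | ∀ i, ⌊p.2 i / (K/3)⌋ = ⌊p.1 i / (K/3)⌋} with hSdef
    have hSmeas : MeasurableSet S := by
      have h : S = ⋂ i, {p : E3 × E3 | ⌊p.2 i / (K/3)⌋ = ⌊p.1 i / (K/3)⌋} := by
        ext p; simp [hSdef]
      rw [h]
      refine MeasurableSet.iInter fun i => ?_
      exact measurableSet_eq_fun
        (((stmt4_eval_measurable i).comp measurable_snd).div_const _).floor
        (((stmt4_eval_measurable i).comp measurable_fst).div_const _).floor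
    set k : E3 × E3 → ℝ≥0∞ := S.indicator (fun p => f p.2) with hkdef
    have hkmeas : Measurable k := (hfmeas.comp measurable_snd).indicator hSmeas
    have hGk : ∀ x, G x = ∫⁻ y, k (x, y) := by
      intro x
      show (∫⁻ y in Q x, f y) = ∫⁻ y, k (x, y)
      rw [← lintegral_indicator (hQmeas x)]
      refine lintegral_congr fun y => ?_
      by_cases hy : y ∈ Q x
      · rw [Set.indicator_of_mem hy]
        exact (Set.indicator_of_mem (show (x,y) ∈ S from hy) (fun p : E3 × E3 => f p.2)).symm
      · rw [Set.indicator_of_notMem hy]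
        exact (Set.indicator_of_notMem (show (x,y) ∉ S from hy) (fun p : E3 × E3 => f p.2)).symm
    have hGmeas : Measurable G := by
      have h : G = fun x => ∫⁻ y, k (x, y) := funext hGk
      rw [h]
      exact hkmeas.lintegral_prod_right'
    have hswap : (∫⁻ x in B, G x) = ∫⁻ y, ∫⁻ x in B, k (x, y) := by
      simp_rw [hGk]
      exact lintegral_lintegral_swap hkmeas.aemeasurable
    have hinner : ∀ y, (∫⁻ x in B, k (x, y)) = f y * volume (Q y ∩ B) := by
      intro y
      have hxy : ∀ x, k (x, y) = (Q y).indicator (fun _ => f y) x := by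
        intro x
        by_cases hx : x ∈ Q y
        · have hxS : (x, y) ∈ S := fun i => (hx i).symm
          rw [hkdef, Set.indicator_of_mem hxS, Set.indicator_of_mem hx]
        · have hxS : (x, y) ∉ S := fun hS => hx fun i => (hS i).symm
          rw [hkdef, Set.indicator_of_notMem hxS, Set.indicator_of_notMem hx]
      simp_rw [hxy]
      rw [lintegral_indicator_const (hQmeas y), Measure.restrict_apply (hQmeas y)]
    have hempty : ∀ y, y ∉ ball x₀ (R + K) → Q y ∩ B = ∅ := by
      intro y hy
      ext x
      simp only [Set.mem_inter_iff, Set.mem_empty_iff_false, iff_false, not_and]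
      intro hxQ hxB
      apply hy
      have hyQx : y ∈ Q x := fun i => (hxQ i).symm
      have h5 : dist y x < K := mem_ball.1 (hQball x hyQx)
      have h6 : dist x x₀ < R := mem_ball.1 hxB
      have h7 : dist y x₀ ≤ dist y x + dist x x₀ := dist_triangle y x x₀
      exact mem_ball.2 (by linarith)
    have hpt : ∀ y, f y * volume (Q y ∩ B)
        ≤ (ball x₀ (R+K)).indicator (fun y => ENNReal.ofReal (K/3) ^ 3 * f y) y := by
      intro y
      by_cases hy : y ∈ ball x₀ (R+K)
      · rw [Set.indicator_of_mem hy]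
        calc f y * volume (Q y ∩ B)
            ≤ f y * (ENNReal.ofReal (K/3) ^ 3) :=
              mul_le_mul_right (le_trans (measure_mono Set.inter_subset_left) (hQvol y)) _
          _ = ENNReal.ofReal (K/3) ^ 3 * f y := mul_comm _ _
      · rw [Set.indicator_of_notMem hy, hempty y hy]
        simp
    have hRK1 : (1:ℝ) ≤ R + K := by linarith
    have hlin : (∫⁻ x in B, G x)
        ≤ ENNReal.ofReal (K/3) ^ 3 * ENNReal.ofReal (A * (R+K) ^ α) := by
      calc (∫⁻ x in B, G x) = ∫⁻ y, ∫⁻ x in B, k (x, y) := hswap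
        _ = ∫⁻ y, f y * volume (Q y ∩ B) := by simp_rw [hinner]
        _ ≤ ∫⁻ y, (ball x₀ (R+K)).indicator
              (fun y => ENNReal.ofReal (K/3) ^ 3 * f y) y := lintegral_mono hpt
        _ = ∫⁻ y in ball x₀ (R+K), ENNReal.ofReal (K/3) ^ 3 * f y :=
              lintegral_indicator measurableSet_ball _
        _ = ENNReal.ofReal (K/3) ^ 3 * ∫⁻ y in ball x₀ (R+K), f y :=
              lintegral_const_mul _ hfmeas
        _ = ENNReal.ofReal (K/3) ^ 3 * ENNReal.ofReal (∫ y in ball x₀ (R+K), H y) := by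
              rw [ofReal_integral_eq_lintegral_ofReal (hHint _ measure_ball_lt_top)
                (Filter.Eventually.of_forall h0)]
        _ ≤ ENNReal.ofReal (K/3) ^ 3 * ENNReal.ofReal (A * (R+K) ^ α) :=
              mul_le_mul_right (ENNReal.ofReal_le_ofReal (hdim x₀ (R+K) hRK1)) _
    have hint_eq : (∫ x in B, (G x).toReal) = (∫⁻ x in B, G x).toReal := by
      rw [integral_eq_lintegral_of_nonneg_ae
        (Filter.Eventually.of_forall fun x => ENNReal.toReal_nonneg)
        hGmeas.ennreal_toReal.aestronglyMeasurable.restrict]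
      congr 1
      exact lintegral_congr fun x => ENNReal.ofReal_toReal (hGfin x)
    have hRKα : (0:ℝ) ≤ A * (R+K) ^ α := by
      have : (0:ℝ) < (R+K) ^ α := Real.rpow_pos_of_pos (by linarith) _
      positivity
    have hIle : (∫ x in B, (G x).toReal) ≤ (K/3) ^ 3 * (A * (R+K) ^ α) := by
      rw [hint_eq]
      have h8 := ENNReal.toReal_mono (ENNReal.mul_ne_top (ENNReal.pow_ne_top ENNReal.ofReal_ne_top) ENNReal.ofReal_ne_top) hlin
      calc (∫⁻ x in B, G x).toReal
          ≤ (ENNReal.ofReal (K/3) ^ 3 * ENNReal.ofReal (A * (R+K) ^ α)).toReal := h8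
        _ = (K/3) ^ 3 * (A * (R+K) ^ α) := by
            rw [ENNReal.toReal_mul, ENNReal.toReal_pow, ENNReal.toReal_ofReal hc.le,
              ENNReal.toReal_ofReal hRKα]
    have heq : (∫ x in B, (A⁻¹ * K ^ (-α) * ∫ y in Q x, H y))
        = A⁻¹ * K ^ (-α) * ∫ x in B, (G x).toReal := by
      simp_rw [hval]
      exact integral_const_mul _ _
    rw [heq]
    have hstep : A⁻¹ * K ^ (-α) * (∫ x in B, (G x).toReal)
        ≤ A⁻¹ * K ^ (-α) * ((K/3) ^ 3 * (A * (R+K) ^ α)) := by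
      apply mul_le_mul_of_nonneg_left hIle
      positivity
    refine le_trans hstep ?_
    -- arithmetic
    have hKsplit : K ^ (-α) * K ^ (3:ℕ) = K ^ (3 - α) := by
      rw [← Real.rpow_natCast K 3, ← Real.rpow_add hK0]
      congr 1
      push_cast
      ring
    have hcancel : A⁻¹ * A = 1 := inv_mul_cancel₀ hA.ne'
    have h2R : (R + K) ^ α ≤ 8 * R ^ α := by
      have e1 : (R+K) ^ α ≤ (2*R) ^ α :=
        Real.rpow_le_rpow (by linarith) (by linarith) hα.le
      have e2 : ((2:ℝ)*R) ^ α = 2 ^ α * R ^ α := Real.mul_rpow (by norm_num) hR0.le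
      have e3 : (2:ℝ) ^ α ≤ 2 ^ (3:ℝ) :=
        Real.rpow_le_rpow_of_exponent_le (by norm_num) hα3
      have e4 : (2:ℝ) ^ (3:ℝ) = 8 := by
        rw [show (3:ℝ) = ((3:ℕ):ℝ) by norm_num, Real.rpow_natCast]; norm_num
      have e5 : (0:ℝ) ≤ R ^ α := (Real.rpow_pos_of_pos hR0 _).le
      nlinarith
    have hKpos : (0:ℝ) < K ^ (3 - α) := Real.rpow_pos_of_pos hK0 _
    have hfinal : A⁻¹ * K ^ (-α) * ((K/3) ^ 3 * (A * (R+K) ^ α))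
        = (K ^ (3 - α) / 27) * ((A⁻¹ * A) * (R+K) ^ α) := by
      rw [← hKsplit]; ring
    rw [hfinal, hcancel, one_mul]
    calc (K ^ (3 - α) / 27) * (R+K) ^ α ≤ (K ^ (3 - α) / 27) * (8 * R ^ α) := by
          apply mul_le_mul_of_nonneg_left h2R (by positivity)
      _ ≤ 8 * K ^ (3 - α) * R ^ α := by
          have e5 : (0:ℝ) ≤ R ^ α := (Real.rpow_pos_of_pos hR0 _).le
          nlinarith
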